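/- Let A, B, U_1, U_2 be as follows: U = [U_1, U_2] ∈ R^{d×k} with orthonormal columns, U_1 ∈ R^{d×k1}, U_2 ∈ R^{d×k2}, and V̄ = [V̄_1, V̄_2] ∈ R^{d×k} with orthonormal-column blocks V̄_1, V̄_2. Then ‖(I − UU^⊤)V̄‖ ≤ 2(‖(I − U_1U_1^⊤)V̄_1‖ + ‖(I − U_2U_2^⊤)V̄_2‖), using that ‖U_2U_2^⊤V̄_1‖ ≤ ‖(I − U_1U_1^⊤)V̄_1‖ and ‖U_1U_1^⊤V̄_2‖ ≤ ‖(I − U_2U_2^⊤)V̄_2‖. -/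

import Mathlib

open MeasureTheory ProbabilityTheory Real Matrix

noncomputable def euclNorm {ι : Type*} [Fintype ι] (v : ι → ℝ) : ℝ :=
  Real.sqrt (∑ i, (v i)^2)

noncomputable def specNorm {ι κ : Type*} [Fintype ι] [Fintype κ] (A : Matrix ι κ ℝ) : ℝ :=
  sSup {r : ℝ | ∃ x : κ → ℝ, euclNorm x = 1 ∧ r = euclNorm (A.mulVec x)}

noncomputable def sigmaMin {ι κ : Type*} [Fintype ι] [Fintype κ] (A : Matrix ι κ ℝ) : ℝ :=
  sInf {r : ℝ | ∃ x : κ → ℝ, euclNorm x = 1 ∧ r = euclNorm (A.mulVec x)}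

noncomputable def frobNorm {ι κ : Type*} [Fintype ι] [Fintype κ] (A : Matrix ι κ ℝ) : ℝ :=
  Real.sqrt (∑ i, ∑ j, (A i j)^2)

noncomputable def stdGaussian (d : ℕ) : Measure (Fin d → ℝ) :=
  Measure.pi fun _ => gaussianReal 0 1

section helpers
variable {ι κ : Type*} [Fintype ι] [Fintype κ]

lemma euclNorm_nonneg (v : ι → ℝ) : 0 ≤ euclNorm v := Real.sqrt_nonneg _

lemma euclNorm_sq (v : ι → ℝ) : euclNorm v ^ 2 = ∑ i, (v i)^2 :=
  Real.sq_sqrt (by positivity)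

lemma euclNorm_sq_dot (v : ι → ℝ) : euclNorm v ^ 2 = v ⬝ᵥ v := by
  rw [euclNorm_sq]; simp [dotProduct, sq]

lemma euclNorm_eq_sqrt_dot (v : ι → ℝ) : euclNorm v = Real.sqrt (v ⬝ᵥ v) := by
  unfold euclNorm; congr 1; simp [dotProduct, sq]

lemma euclNorm_smul (c : ℝ) (v : ι → ℝ) : euclNorm (c • v) = |c| * euclNorm v := by
  unfold euclNorm
  rw [← Real.sqrt_sq_eq_abs, ← Real.sqrt_mul (sq_nonneg c), Finset.mul_sum]
  congr 1
  exact Finset.sum_congr rfl fun i _ => by simp [mul_pow]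

lemma euclNorm_eq_norm (v : ι → ℝ) :
    euclNorm v = ‖(WithLp.equiv 2 (ι → ℝ)).symm v‖ := by
  rw [EuclideanSpace.norm_eq]
  simp [euclNorm, sq_abs]

lemma euclNorm_add_le (u v : ι → ℝ) : euclNorm (u + v) ≤ euclNorm u + euclNorm v := by
  rw [euclNorm_eq_norm, euclNorm_eq_norm, euclNorm_eq_norm, WithLp.equiv_symm_apply, WithLp.toLp_add]
  exact norm_add_le _ _

lemma euclNorm_neg (v : ι → ℝ) : euclNorm (-v) = euclNorm v := by
  unfold euclNorm; congr 1; exact Finset.sum_congr rfl fun i _ => by simp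

lemma euclNorm_sub_le (u v : ι → ℝ) : euclNorm (u - v) ≤ euclNorm u + euclNorm v := by
  rw [sub_eq_add_neg]
  exact (euclNorm_add_le u (-v)).trans (by rw [euclNorm_neg])

lemma euclNorm_eq_zero {v : ι → ℝ} (h : euclNorm v = 0) : v = 0 := by
  have h2 : ∑ i, (v i)^2 = 0 := by
    have := euclNorm_sq v; rw [h] at this; simpa using this.symm
  funext i
  have := (Finset.sum_eq_zero_iff_of_nonneg (fun i _ => sq_nonneg (v i))).1 h2 i (Finset.mem_univ i)
  exact pow_eq_zero_iff (by norm_num) |>.1 this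

lemma euclNorm_mulVec_le_frob (A : Matrix ι κ ℝ) (x : κ → ℝ) :
    euclNorm (A *ᵥ x) ≤ frobNorm A * euclNorm x := by
  have key : ∀ i, (A *ᵥ x) i ^ 2 ≤ (∑ j, (A i j)^2) * ∑ j, (x j)^2 := fun i =>
    Finset.sum_mul_sq_le_sq_mul_sq Finset.univ (fun j => A i j) x
  have h1 : ∑ i, ((A *ᵥ x) i)^2 ≤ (∑ i, ∑ j, (A i j)^2) * ∑ j, (x j)^2 := by
    rw [Finset.sum_mul]
    exact Finset.sum_le_sum fun i _ => key i
  calc euclNorm (A *ᵥ x) = Real.sqrt (∑ i, ((A *ᵥ x) i)^2) := rfl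
    _ ≤ Real.sqrt ((∑ i, ∑ j, (A i j)^2) * ∑ j, (x j)^2) := Real.sqrt_le_sqrt h1
    _ = frobNorm A * euclNorm x := Real.sqrt_mul (by positivity) _

lemma specNorm_bddAbove (A : Matrix ι κ ℝ) :
    BddAbove {r : ℝ | ∃ x : κ → ℝ, euclNorm x = 1 ∧ r = euclNorm (A.mulVec x)} := by
  refine ⟨frobNorm A, fun r ⟨x, hx, hr⟩ => ?_⟩
  rw [hr]
  calc euclNorm (A *ᵥ x) ≤ frobNorm A * euclNorm x := euclNorm_mulVec_le_frob A x
    _ = frobNorm A := by rw [hx, mul_one]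

lemma specNorm_nonneg (A : Matrix ι κ ℝ) : 0 ≤ specNorm A :=
  Real.sSup_nonneg fun r ⟨x, _, hr⟩ => hr ▸ euclNorm_nonneg _

lemma euclNorm_mulVec_le (A : Matrix ι κ ℝ) (x : κ → ℝ) :
    euclNorm (A *ᵥ x) ≤ specNorm A * euclNorm x := by
  rcases eq_or_ne (euclNorm x) 0 with h | h
  · have h0 : x = 0 := euclNorm_eq_zero h
    subst h0
    simp [euclNorm, mulVec_zero]
  · have hpos : 0 < euclNorm x := lt_of_le_of_ne (euclNorm_nonneg x) (Ne.symm h)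
    set c := euclNorm x
    have hy : euclNorm (c⁻¹ • x) = 1 := by
      rw [euclNorm_smul, abs_of_pos (inv_pos.2 hpos), inv_mul_cancel₀ h]
    have hmem : euclNorm (A *ᵥ (c⁻¹ • x)) ∈
        {r : ℝ | ∃ x : κ → ℝ, euclNorm x = 1 ∧ r = euclNorm (A.mulVec x)} :=
      ⟨c⁻¹ • x, hy, rfl⟩
    have hle := le_csSup (specNorm_bddAbove A) hmem
    rw [mulVec_smul, euclNorm_smul, abs_of_pos (inv_pos.2 hpos)] at hle
    calc euclNorm (A *ᵥ x) = c * (c⁻¹ * euclNorm (A *ᵥ x)) := by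
          field_simp
      _ ≤ c * specNorm A := by
          exact mul_le_mul_of_nonneg_left hle hpos.le
      _ = specNorm A * c := mul_comm _ _

end helpers

section matrixHelpers
variable {m n : Type*} [Fintype m] [Fintype n] [DecidableEq m] [DecidableEq n]

lemma dot_self_nonneg (v : m → ℝ) : 0 ≤ v ⬝ᵥ v :=
  Finset.sum_nonneg fun i _ => mul_self_nonneg (v i)

lemma euclNorm_mulVec_iso (U : Matrix m n ℝ) (hU : Uᵀ * U = 1) (w : n → ℝ) :
    euclNorm (U *ᵥ w) = euclNorm w := by
  rw [euclNorm_eq_sqrt_dot, euclNorm_eq_sqrt_dot]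
  congr 1
  calc (U *ᵥ w) ⬝ᵥ (U *ᵥ w) = ((U *ᵥ w) ᵥ* U) ⬝ᵥ w := dotProduct_mulVec _ _ _
    _ = (Uᵀ *ᵥ (U *ᵥ w)) ⬝ᵥ w := by rw [mulVec_transpose]
    _ = ((Uᵀ * U) *ᵥ w) ⬝ᵥ w := by rw [mulVec_mulVec]
    _ = w ⬝ᵥ w := by rw [hU, one_mulVec]

lemma transpose_mulVec_le (U : Matrix m n ℝ) (hU : Uᵀ * U = 1) (v : m → ℝ) :
    euclNorm (Uᵀ *ᵥ v) ≤ euclNorm v := by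
  rw [euclNorm_eq_sqrt_dot, euclNorm_eq_sqrt_dot]
  apply Real.sqrt_le_sqrt
  have h1 : (Uᵀ *ᵥ v) ⬝ᵥ (Uᵀ *ᵥ v) = ((U * Uᵀ) *ᵥ v) ⬝ᵥ v := by
    rw [dotProduct_mulVec, ← mulVec_transpose, mulVec_mulVec, transpose_transpose]
  set Q : Matrix m m ℝ := 1 - U * Uᵀ with hQdef
  have hPsym : (U * Uᵀ)ᵀ = U * Uᵀ := by rw [transpose_mul, transpose_transpose]
  have hPP : (U * Uᵀ) * (U * Uᵀ) = U * Uᵀ := by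
    rw [Matrix.mul_assoc U Uᵀ (U * Uᵀ), ← Matrix.mul_assoc Uᵀ U Uᵀ, hU, Matrix.one_mul]
  have hQQ : Qᵀ * Q = Q := by
    rw [hQdef, transpose_sub, transpose_one, hPsym, sub_mul, one_mul, mul_sub, mul_one, hPP,
      sub_self, sub_zero]
  have hkey : (Q *ᵥ v) ⬝ᵥ v = (Q *ᵥ v) ⬝ᵥ (Q *ᵥ v) := by
    conv_rhs => rw [dotProduct_mulVec, ← mulVec_transpose, mulVec_mulVec, hQQ]
  have hnn : 0 ≤ (Q *ᵥ v) ⬝ᵥ v := hkey ▸ dot_self_nonneg (Q *ᵥ v)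
  have hexp : (Q *ᵥ v) ⬝ᵥ v = v ⬝ᵥ v - ((U * Uᵀ) *ᵥ v) ⬝ᵥ v := by
    rw [hQdef, sub_mulVec, one_mulVec, sub_dotProduct]
  rw [h1]
  linarith [hexp ▸ hnn]

lemma proj_contract (U : Matrix m n ℝ) (hU : Uᵀ * U = 1) (v : m → ℝ) :
    euclNorm ((U * Uᵀ) *ᵥ v) ≤ euclNorm v := by
  rw [← mulVec_mulVec, euclNorm_mulVec_iso U hU]
  exact transpose_mulVec_le U hU v

end matrixHelpers

lemma block_bound {d k1 k2 : ℕ}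
    (U1 : Matrix (Fin d) (Fin k1) ℝ) (U2 : Matrix (Fin d) (Fin k2) ℝ)
    (hU2 : U2ᵀ * U2 = 1) (hU21 : U2ᵀ * U1 = 0) (w : Fin d → ℝ) :
    euclNorm ((1 - (U1 * U1ᵀ + U2 * U2ᵀ)) *ᵥ w)
      ≤ 2 * euclNorm ((1 - U1 * U1ᵀ) *ᵥ w) := by
  have hsplit : (1 : Matrix (Fin d) (Fin d) ℝ) - (U1 * U1ᵀ + U2 * U2ᵀ)
      = (1 - U1 * U1ᵀ) - U2 * U2ᵀ := by rw [sub_add_eq_sub_sub]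
  have hzero : U2 * U2ᵀ * (U1 * U1ᵀ) = 0 := by
    rw [Matrix.mul_assoc U2 U2ᵀ (U1 * U1ᵀ), ← Matrix.mul_assoc U2ᵀ U1 U1ᵀ, hU21, Matrix.zero_mul, Matrix.mul_zero]
  have habsorb : U2 * U2ᵀ * (1 - U1 * U1ᵀ) = U2 * U2ᵀ := by
    rw [mul_sub, mul_one, hzero, sub_zero]
  have h2 : euclNorm ((U2 * U2ᵀ) *ᵥ w) ≤ euclNorm ((1 - U1 * U1ᵀ) *ᵥ w) := by
    have : (U2 * U2ᵀ) *ᵥ w = (U2 * U2ᵀ) *ᵥ ((1 - U1 * U1ᵀ) *ᵥ w) := by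
      rw [mulVec_mulVec, habsorb]
    rw [this]
    exact proj_contract U2 hU2 _
  calc euclNorm ((1 - (U1 * U1ᵀ + U2 * U2ᵀ)) *ᵥ w)
      = euclNorm ((1 - U1 * U1ᵀ) *ᵥ w - (U2 * U2ᵀ) *ᵥ w) := by rw [hsplit, sub_mulVec]
    _ ≤ euclNorm ((1 - U1 * U1ᵀ) *ᵥ w) + euclNorm ((U2 * U2ᵀ) *ᵥ w) := euclNorm_sub_le _ _
    _ ≤ euclNorm ((1 - U1 * U1ᵀ) *ᵥ w) + euclNorm ((1 - U1 * U1ᵀ) *ᵥ w) := by linarith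
    _ = 2 * euclNorm ((1 - U1 * U1ᵀ) *ᵥ w) := by ring


/-- Block bound: for `U = [U₁, U₂]` with orthonormal columns (`U₁ᵀU₂ = 0`) and
`V̄ = [V̄₁, V̄₂]` with orthonormal-column blocks,
`‖(I − UUᵀ)V̄‖ ≤ 2(‖(I − U₁U₁ᵀ)V̄₁‖ + ‖(I − U₂U₂ᵀ)V̄₂‖)`. -/
theorem stmt19 (d k1 k2 : ℕ)
    (U1 : Matrix (Fin d) (Fin k1) ℝ) (U2 : Matrix (Fin d) (Fin k2) ℝ)
    (Vb1 : Matrix (Fin d) (Fin k1) ℝ) (Vb2 : Matrix (Fin d) (Fin k2) ℝ)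
    (hU1 : U1ᵀ * U1 = 1) (hU2 : U2ᵀ * U2 = 1) (hU12 : U1ᵀ * U2 = 0)
    (hVb1 : Vb1ᵀ * Vb1 = 1) (hVb2 : Vb2ᵀ * Vb2 = 1) :
    specNorm ((1 - (U1 * U1ᵀ + U2 * U2ᵀ)) * Matrix.fromCols Vb1 Vb2)
      ≤ 2 * (specNorm ((1 - U1 * U1ᵀ) * Vb1) + specNorm ((1 - U2 * U2ᵀ) * Vb2)) := by
  have hU21 : U2ᵀ * U1 = 0 := by
    have h := congrArg Matrix.transpose hU12
    simpa [Matrix.transpose_mul] using h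
  set s1 := specNorm ((1 - U1 * U1ᵀ) * Vb1) with hs1
  set s2 := specNorm ((1 - U2 * U2ᵀ) * Vb2) with hs2
  have hs1n : 0 ≤ s1 := specNorm_nonneg _
  have hs2n : 0 ≤ s2 := specNorm_nonneg _
  apply Real.sSup_le
  · rintro r ⟨x, hx, rfl⟩
    set a : Fin k1 → ℝ := fun i => x (Sum.inl i) with hadef
    set b : Fin k2 → ℝ := fun i => x (Sum.inr i) with hbdef
    have hxe : x = Sum.elim a b := by funext i; cases i <;> rfl
    have ha : euclNorm a ≤ 1 := by
      rw [← hx]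
      unfold euclNorm
      apply Real.sqrt_le_sqrt
      rw [Fintype.sum_sum_type]
      exact le_add_of_nonneg_right (by positivity)
    have hb : euclNorm b ≤ 1 := by
      rw [← hx]
      unfold euclNorm
      apply Real.sqrt_le_sqrt
      rw [Fintype.sum_sum_type]
      exact le_add_of_nonneg_left (by positivity)
    have hM : ((1 - (U1 * U1ᵀ + U2 * U2ᵀ)) * Matrix.fromCols Vb1 Vb2) *ᵥ x
        = (1 - (U1 * U1ᵀ + U2 * U2ᵀ)) *ᵥ (Vb1 *ᵥ a)
          + (1 - (U1 * U1ᵀ + U2 * U2ᵀ)) *ᵥ (Vb2 *ᵥ b) := by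
      rw [hxe, ← Matrix.mulVec_mulVec, Matrix.fromCols_mulVec_sumElim, Matrix.mulVec_add]
    have hcomm : (1 : Matrix (Fin d) (Fin d) ℝ) - (U1 * U1ᵀ + U2 * U2ᵀ)
        = 1 - (U2 * U2ᵀ + U1 * U1ᵀ) := by rw [add_comm]
    have hb1 : euclNorm ((1 - (U1 * U1ᵀ + U2 * U2ᵀ)) *ᵥ (Vb1 *ᵥ a)) ≤ 2 * s1 := by
      refine (block_bound U1 U2 hU2 hU21 _).trans ?_
      rw [Matrix.mulVec_mulVec]
      have := euclNorm_mulVec_le ((1 - U1 * U1ᵀ) * Vb1) a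
      have h2 : specNorm ((1 - U1 * U1ᵀ) * Vb1) * euclNorm a ≤ s1 * 1 :=
        mul_le_mul_of_nonneg_left ha hs1n
      nlinarith
    have hb2 : euclNorm ((1 - (U1 * U1ᵀ + U2 * U2ᵀ)) *ᵥ (Vb2 *ᵥ b)) ≤ 2 * s2 := by
      rw [hcomm]
      refine (block_bound U2 U1 hU1 hU12 _).trans ?_
      rw [Matrix.mulVec_mulVec]
      have := euclNorm_mulVec_le ((1 - U2 * U2ᵀ) * Vb2) b
      have h2 : specNorm ((1 - U2 * U2ᵀ) * Vb2) * euclNorm b ≤ s2 * 1 :=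
        mul_le_mul_of_nonneg_left hb hs2n
      nlinarith
    calc euclNorm (((1 - (U1 * U1ᵀ + U2 * U2ᵀ)) * Matrix.fromCols Vb1 Vb2) *ᵥ x)
        = euclNorm ((1 - (U1 * U1ᵀ + U2 * U2ᵀ)) *ᵥ (Vb1 *ᵥ a)
            + (1 - (U1 * U1ᵀ + U2 * U2ᵀ)) *ᵥ (Vb2 *ᵥ b)) := by rw [hM]
      _ ≤ euclNorm ((1 - (U1 * U1ᵀ + U2 * U2ᵀ)) *ᵥ (Vb1 *ᵥ a))
            + euclNorm ((1 - (U1 * U1ᵀ + U2 * U2ᵀ)) *ᵥ (Vb2 *ᵥ b)) := euclNorm_add_le _ _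
      _ ≤ 2 * s1 + 2 * s2 := add_le_add hb1 hb2
      _ = 2 * (s1 + s2) := by ring
  · linarith
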